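/- Let V be a (G_Γ, β, γ0)-vertex coalgebra as in the context, and assume β satisfies β(γ1, γ2)·β(γ1, γ3) = β(γ1, γ2+γ3) for all γ1, γ2, γ3 ∈ Γ. Then for every v ∈ Ker Ŷ_{−2}: (i) Ŷ_0(v) lies in the image of the canonical map (Ker Ŷ_{−2}) ⊗ (Ker Ŷ_{−2}) → V ⊗ V; (ii) Ŷ_0(v) + T^β(Ŷ_0(v)) = 0; (iii) (id_{V⊗V⊗V} + ξ^β + ξ^β∘ξ^β)((id_V ⊗ Ŷ_0)(Ŷ_0(v))) = 0 in V⊗V⊗V, where ξ^β = (id_V ⊗ T^β)∘(T^β ⊗ id_V); (iv) (Ŷ_{−1} ⊗ id_V)(Ŷ_0(v)) = (id_V ⊗ Ŷ_0)(Ŷ_{−1}(v)) − ξ^β((Ŷ_0 ⊗ id_V)(Ŷ_{−1}(v))), all identities being read via the canonical associativity isomorphisms of triple tensor products. Consequently Ker Ŷ_{−2}, with the restrictions of Ŷ_{−1}, ε and Ŷ_0, is a β-cocommutative (G_Γ, β)-co-Poisson coalgebra of degree 0. -/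

import Mathlib

open TensorProduct

/-- The generalized binomial coefficient `binom(a, i) = a(a-1)⋯(a-i+1)/i!`
for `a : ℤ`, `i : ℕ`; it is an integer. -/
def zbinom (a : ℤ) (i : ℕ) : ℤ :=
  if 0 ≤ a then (a.toNat.choose i : ℤ)
  else (-1 : ℤ) ^ i * ((((i : ℤ) - a - 1).toNat).choose i : ℤ)

/-- The degree-`δ` component of `V ⊗ V` for a `Γ`-graded space
`V = ⊕ Vg γ`: the span of the pure tensors `u ⊗ v` with `u ∈ Vg γ1`,
`v ∈ Vg γ2` and `γ1 + γ2 = δ`. -/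
def tensorDeg {k Γ V : Type*} [Field k] [AddCommGroup Γ]
    [AddCommGroup V] [Module k V] (Vg : Γ → Submodule k V) (δ : Γ) :
    Submodule k (V ⊗[k] V) :=
  Submodule.span k {x : V ⊗[k] V | ∃ (γ1 γ2 : Γ) (u v : V),
    u ∈ Vg γ1 ∧ v ∈ Vg γ2 ∧ γ1 + γ2 = δ ∧ u ⊗ₜ[k] v = x}

/-- A `(G_Γ, β, γ0)`-vertex coalgebra in component form: a `Γ`-graded
`k`-vector space `V` (internal direct sum of the `Vg γ`), linear
coproducts `Yc n : V → V ⊗ V` of degree `n • γ0`, a covacuum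
`ε : V → k` vanishing outside degree `0`, and the twist
`T^β(u ⊗ v) = β(γ1, γ2) • (v ⊗ u)` on homogeneous tensors, satisfying
truncation, covacuum, cocreation, the `β`-co-Jacobi identity and the
coderivation properties of `D̂ = (ε ⊗ id)∘Ŷ_{-2}` (via `k ⊗ V ≅ V`). -/
structure VCoalg (k : Type*) [Field k] (Γ : Type*) [AddCommGroup Γ]
    [DecidableEq Γ] (γ0 : Γ) (β : Γ → Γ → k)
    (V : Type*) [AddCommGroup V] [Module k V] where
  Vg : Γ → Submodule k V
  internal : DirectSum.IsInternal Vg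
  Yc : ℤ → V →ₗ[k] V ⊗[k] V
  eps : V →ₗ[k] k
  T : V ⊗[k] V →ₗ[k] V ⊗[k] V
  grading : ∀ (n : ℤ) (γ : Γ) (v : V), v ∈ Vg γ →
      Yc n v ∈ tensorDeg Vg (γ + n • γ0)
  eps_grading : ∀ (γ : Γ), γ ≠ 0 → ∀ v ∈ Vg γ, eps v = 0
  T_apply : ∀ (γ1 γ2 : Γ) (u v : V), u ∈ Vg γ1 → v ∈ Vg γ2 →
      T (u ⊗ₜ[k] v) = β γ1 γ2 • (v ⊗ₜ[k] u)
  truncation : ∀ v : V, ∃ N : ℤ, ∀ n : ℤ, N ≤ n → Yc n v = 0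
  covacuum : ∀ v : V,
      (TensorProduct.rid k V)
        (TensorProduct.map (LinearMap.id : V →ₗ[k] V) eps (Yc (-1) v)) = v
  covacuum' : ∀ n : ℤ, n ≠ -1 → ∀ v : V,
      (TensorProduct.rid k V)
        (TensorProduct.map (LinearMap.id : V →ₗ[k] V) eps (Yc n v)) = 0
  cocreation : ∀ v : V,
      (TensorProduct.lid k V)
        (TensorProduct.map eps (LinearMap.id : V →ₗ[k] V) (Yc (-1) v)) = v
  cocreation' : ∀ n : ℤ, 0 ≤ n → ∀ v : V,
      (TensorProduct.lid k V)
        (TensorProduct.map eps (LinearMap.id : V →ₗ[k] V) (Yc n v)) = 0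
  coJacobi : ∀ (l m n : ℤ) (v : V),
      (∑ᶠ i : ℕ, (((-1 : k) ^ i * (zbinom l i : k)) •
          (TensorProduct.assoc k V V V)
            (TensorProduct.map (Yc (n + (i : ℤ)))
              (LinearMap.id : V →ₗ[k] V) (Yc (m + l - (i : ℤ)) v))))
        - (-1 : k) ^ l •
            (∑ᶠ i : ℕ, (((-1 : k) ^ i * (zbinom l i : k)) •
              TensorProduct.map (LinearMap.id : V →ₗ[k] V) T
                ((TensorProduct.assoc k V V V)
                  (TensorProduct.map (Yc (m + (i : ℤ)))
                    (LinearMap.id : V →ₗ[k] V) (Yc (n + l - (i : ℤ)) v)))))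
        = ∑ᶠ i : ℕ, ((zbinom m i : k) •
            TensorProduct.map (LinearMap.id : V →ₗ[k] V) (Yc (l + (i : ℤ)))
              (Yc (m + n - (i : ℤ)) v))
  coderiv1 : ∀ (n : ℤ) (v : V),
      Yc n ((TensorProduct.lid k V)
          (TensorProduct.map eps (LinearMap.id : V →ₗ[k] V) (Yc (-2) v)))
        - TensorProduct.map
            ((TensorProduct.lid k V).toLinearMap ∘ₗ
              TensorProduct.map eps (LinearMap.id : V →ₗ[k] V) ∘ₗ Yc (-2))
            (LinearMap.id : V →ₗ[k] V) (Yc n v)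
        = (-n) • Yc (n - 1) v
  coderiv2 : ∀ (n : ℤ) (v : V),
      TensorProduct.map (LinearMap.id : V →ₗ[k] V)
          ((TensorProduct.lid k V).toLinearMap ∘ₗ
            TensorProduct.map eps (LinearMap.id : V →ₗ[k] V) ∘ₗ Yc (-2))
          (Yc n v)
        = (-n) • Yc (n - 1) v

/-- The permutation `ξ^β = (id ⊗ T^β)∘(T^β ⊗ id)` on `V ⊗ (V ⊗ V)`, read via
the canonical associativity isomorphisms. -/
noncomputable def xiB {k V : Type*} [Field k] [AddCommGroup V] [Module k V]
    (T : V ⊗[k] V →ₗ[k] V ⊗[k] V) :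
    V ⊗[k] (V ⊗[k] V) →ₗ[k] V ⊗[k] (V ⊗[k] V) :=
  TensorProduct.map (LinearMap.id : V →ₗ[k] V) T ∘ₗ
    (TensorProduct.assoc k V V V).toLinearMap ∘ₗ
    TensorProduct.map T (LinearMap.id : V →ₗ[k] V) ∘ₗ
    (TensorProduct.assoc k V V V).symm.toLinearMap

section AuxLemmas

open TensorProduct LinearMap

set_option linter.unusedSectionVars false

variable {k Γ V : Type*} [Field k] [CharZero k] [AddCommGroup Γ]
    [DecidableEq Γ] [AddCommGroup V] [Module k V] {γ0 : Γ} {β : Γ → Γ → k}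

lemma zbinom_zero_eq {i : ℕ} (hi : i ≠ 0) : zbinom 0 i = 0 := by
  simp [zbinom, Nat.choose_eq_zero_of_lt (Nat.pos_of_ne_zero hi)]

lemma zbinom_zero_zero : zbinom 0 0 = 1 := by norm_num [zbinom]

lemma zbinom_neg_one_zero : zbinom (-1) 0 = 1 := by norm_num [zbinom]

/-- Truncation below: if `Ŷ_{-2} v = 0` then `Ŷ_m v = 0` for all `m ≤ -2`. -/
lemma Yc_eq_zero (A : VCoalg k Γ γ0 β V) {v : V} (hv : A.Yc (-2) v = 0)
    {m : ℤ} (hm : m ≤ -2) : A.Yc m v = 0 := by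
  have key : ∀ j : ℕ, A.Yc (-2 - (j : ℤ)) v = 0 := by
    intro j
    induction j with
    | zero => simpa using hv
    | succ n ih =>
      have h := A.coderiv2 (-2 - (n : ℤ)) v
      rw [ih, map_zero] at h
      have h2 : (((2 + (n : ℤ) : ℤ)) : k) • A.Yc (-2 - (n : ℤ) - 1) v = 0 := by
        rw [Int.cast_smul_eq_zsmul]
        have : -(-2 - (n : ℤ)) = 2 + (n : ℤ) := by ring
        rw [← this, ← h]
      have h4 : A.Yc (-2 - (n : ℤ) - 1) v = 0 := by
        rcases smul_eq_zero.mp h2 with h' | h'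
        · exfalso
          have : (((2 + (n : ℤ) : ℤ)) : k) ≠ 0 := by
            rw [Int.cast_ne_zero]; omega
          exact this h'
        · exact h'
      have harg : (-2 - ((n + 1 : ℕ) : ℤ)) = (-2 - (n : ℤ) - 1) := by push_cast; ring
      rw [harg]; exact h4
  obtain ⟨j, hj⟩ : ∃ j : ℕ, m = -2 - (j : ℤ) := ⟨(-2 - m).toNat, by omega⟩
  rw [hj]; exact key j

/-- Collapsed `β`-co-Jacobi identity for `l = 0`. -/
lemma coJ_l0 (A : VCoalg k Γ γ0 β V) (m n : ℤ) (v : V) :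
    (TensorProduct.assoc k V V V)
        (TensorProduct.map (A.Yc n) (LinearMap.id : V →ₗ[k] V) (A.Yc m v))
      - TensorProduct.map (LinearMap.id : V →ₗ[k] V) A.T
          ((TensorProduct.assoc k V V V)
            (TensorProduct.map (A.Yc m) (LinearMap.id : V →ₗ[k] V) (A.Yc n v)))
    = ∑ᶠ i : ℕ, ((zbinom m i : k) •
        TensorProduct.map (LinearMap.id : V →ₗ[k] V) (A.Yc ((i : ℤ)))
          (A.Yc (m + n - (i : ℤ)) v)) := by
  have h := A.coJacobi 0 m n v
  rw [finsum_eq_single _ 0 (fun i hi => by rw [zbinom_zero_eq hi]; simp),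
      finsum_eq_single _ 0 (fun i hi => by rw [zbinom_zero_eq hi]; simp)] at h
  simpa [zbinom_zero_zero] using h

/-- `(id ⊗ Ŷ_{-2})(Ŷ_0 v) = 0` for `v ∈ Ker Ŷ_{-2}`. -/
lemma lT_Yc_neg2 (A : VCoalg k Γ γ0 β V) {v : V} (hv : A.Yc (-2) v = 0) :
    TensorProduct.map (LinearMap.id : V →ₗ[k] V) (A.Yc (-2)) (A.Yc 0 v) = 0 := by
  have h := A.coJacobi (-2) 0 0 v
  have hS1 : ∀ i : ℕ, (((-1 : k) ^ i * (zbinom (-2) i : k)) •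
      (TensorProduct.assoc k V V V)
        (TensorProduct.map (A.Yc (0 + (i : ℤ))) (LinearMap.id : V →ₗ[k] V)
          (A.Yc (0 + (-2) - (i : ℤ)) v))) = 0 := by
    intro i
    rw [Yc_eq_zero A hv (by omega : (0 : ℤ) + (-2) - (i : ℤ) ≤ -2)]
    simp
  have hS2 : ∀ i : ℕ, (((-1 : k) ^ i * (zbinom (-2) i : k)) •
      TensorProduct.map (LinearMap.id : V →ₗ[k] V) A.T
        ((TensorProduct.assoc k V V V)
          (TensorProduct.map (A.Yc (0 + (i : ℤ))) (LinearMap.id : V →ₗ[k] V)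
            (A.Yc (0 + (-2) - (i : ℤ)) v)))) = 0 := by
    intro i
    rw [Yc_eq_zero A hv (by omega : (0 : ℤ) + (-2) - (i : ℤ) ≤ -2)]
    simp
  rw [finsum_eq_zero_of_forall_eq_zero hS1, finsum_eq_zero_of_forall_eq_zero hS2,
      finsum_eq_single _ 0 (fun i hi => by rw [zbinom_zero_eq hi]; simp)] at h
  have h' := h.symm
  simpa [zbinom_zero_zero] using h'

/-- `(Ŷ_{-2} ⊗ id)(Ŷ_0 v) = 0` for `v ∈ Ker Ŷ_{-2}`. -/
lemma rT_Yc_neg2_Y0 (A : VCoalg k Γ γ0 β V) {v : V} (hv : A.Yc (-2) v = 0) :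
    TensorProduct.map (A.Yc (-2)) (LinearMap.id : V →ₗ[k] V) (A.Yc 0 v) = 0 := by
  have h := coJ_l0 A 0 (-2) v
  rw [hv] at h
  rw [finsum_eq_zero_of_forall_eq_zero
      (fun i : ℕ => by
        rw [Yc_eq_zero A hv (by omega : (0 : ℤ) + (-2) - (i : ℤ) ≤ -2)]; simp)] at h
  simp only [map_zero, sub_zero] at h
  exact (LinearEquiv.map_eq_zero_iff _).mp h

/-- `(Ŷ_{-2} ⊗ id)(Ŷ_{-1} v) = 0` for `v ∈ Ker Ŷ_{-2}`. -/
lemma rT_Yc_neg2_Ym1 (A : VCoalg k Γ γ0 β V) {v : V} (hv : A.Yc (-2) v = 0) :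
    TensorProduct.map (A.Yc (-2)) (LinearMap.id : V →ₗ[k] V) (A.Yc (-1) v) = 0 := by
  have h := coJ_l0 A (-1) (-2) v
  rw [hv] at h
  rw [finsum_eq_zero_of_forall_eq_zero
      (fun i : ℕ => by
        rw [Yc_eq_zero A hv (by omega : (-1 : ℤ) + (-2) - (i : ℤ) ≤ -2)]; simp)] at h
  simp only [map_zero, sub_zero] at h
  exact (LinearEquiv.map_eq_zero_iff _).mp h

end AuxLemmas
section AuxLemmas2

open TensorProduct LinearMap

set_option linter.unusedSectionVars false

variable {k Γ V : Type*} [Field k] [CharZero k] [AddCommGroup Γ]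
    [DecidableEq Γ] [AddCommGroup V] [Module k V] {γ0 : Γ} {β : Γ → Γ → k}

/-- The map `Φ = lid ∘ (ε ⊗ id)` on `V ⊗ (V ⊗ V)`. -/
noncomputable def PhiMap (eps : V →ₗ[k] k) :
    V ⊗[k] (V ⊗[k] V) →ₗ[k] V ⊗[k] V :=
  (TensorProduct.lid k (V ⊗[k] V)).toLinearMap ∘ₗ
    TensorProduct.map eps (LinearMap.id : V ⊗[k] V →ₗ[k] V ⊗[k] V)

lemma PhiMap_tmul (eps : V →ₗ[k] k) (u : V) (t : V ⊗[k] V) :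
    PhiMap eps (u ⊗ₜ[k] t) = eps u • t := by
  simp [PhiMap]

lemma Phi_assoc_rT (eps : V →ₗ[k] k) (f : V →ₗ[k] V ⊗[k] V) (X : V ⊗[k] V) :
    PhiMap eps ((TensorProduct.assoc k V V V)
        (TensorProduct.map f (LinearMap.id : V →ₗ[k] V) X)) =
      TensorProduct.map ((TensorProduct.lid k V).toLinearMap ∘ₗ
        TensorProduct.map eps (LinearMap.id : V →ₗ[k] V) ∘ₗ f)
        (LinearMap.id : V →ₗ[k] V) X := by
  induction X using TensorProduct.induction_on with
  | zero => simp
  | add a b ha hb => simp only [map_add, ha, hb]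
  | tmul u u' =>
    simp only [TensorProduct.map_tmul, LinearMap.id_apply, LinearMap.comp_apply,
      LinearEquiv.coe_coe]
    generalize f u = t
    induction t using TensorProduct.induction_on with
    | zero => simp
    | add a b ha hb => simp only [map_add, add_tmul, ha, hb]
    | tmul a b =>
      simp [TensorProduct.assoc_tmul, PhiMap_tmul, TensorProduct.smul_tmul']

lemma Phi_T_assoc_rT (eps : V →ₗ[k] k) (T : V ⊗[k] V →ₗ[k] V ⊗[k] V)
    (f : V →ₗ[k] V ⊗[k] V) (X : V ⊗[k] V) :
    PhiMap eps (TensorProduct.map (LinearMap.id : V →ₗ[k] V) T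
        ((TensorProduct.assoc k V V V)
          (TensorProduct.map f (LinearMap.id : V →ₗ[k] V) X))) =
      T (TensorProduct.map ((TensorProduct.lid k V).toLinearMap ∘ₗ
        TensorProduct.map eps (LinearMap.id : V →ₗ[k] V) ∘ₗ f)
        (LinearMap.id : V →ₗ[k] V) X) := by
  induction X using TensorProduct.induction_on with
  | zero => simp
  | add a b ha hb => simp only [map_add, ha, hb]
  | tmul u u' =>
    simp only [TensorProduct.map_tmul, LinearMap.id_apply, LinearMap.comp_apply,
      LinearEquiv.coe_coe]
    generalize f u = t
    induction t using TensorProduct.induction_on with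
    | zero => simp
    | add a b ha hb => simp only [map_add, add_tmul, ha, hb]
    | tmul a b =>
      simp only [TensorProduct.assoc_tmul, TensorProduct.map_tmul,
        LinearMap.id_apply, PhiMap_tmul, TensorProduct.lid_tmul]
      rw [← TensorProduct.smul_tmul', map_smul]

lemma Phi_lT (eps : V →ₗ[k] k) (g : V →ₗ[k] V ⊗[k] V) (X : V ⊗[k] V) :
    PhiMap eps (TensorProduct.map (LinearMap.id : V →ₗ[k] V) g X) =
      g ((TensorProduct.lid k V)
        (TensorProduct.map eps (LinearMap.id : V →ₗ[k] V) X)) := by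
  induction X using TensorProduct.induction_on with
  | zero => simp
  | add a b ha hb => simp only [map_add, ha, hb]
  | tmul u u' => simp [PhiMap_tmul, TensorProduct.map_tmul]

/-- Statement (ii): skew-symmetry of `Ŷ_0` on `Ker Ŷ_{-2}`. -/
lemma skew (A : VCoalg k Γ γ0 β V) {v : V} (hv : A.Yc (-2) v = 0) :
    A.Yc 0 v + A.T (A.Yc 0 v) = 0 := by
  have h := coJ_l0 A (-1) 0 v
  rw [finsum_eq_single _ 0 (fun i hi => by
    rw [Yc_eq_zero A hv (by
      have : 1 ≤ (i : ℤ) := by exact_mod_cast Nat.one_le_iff_ne_zero.mpr hi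
      omega : (-1 : ℤ) + 0 - (i : ℤ) ≤ -2)]
    simp)] at h
  have hE0 : (TensorProduct.lid k V).toLinearMap ∘ₗ
      TensorProduct.map A.eps (LinearMap.id : V →ₗ[k] V) ∘ₗ A.Yc 0 = 0 :=
    LinearMap.ext fun w => by simpa using A.cocreation' 0 le_rfl w
  have hEm1 : (TensorProduct.lid k V).toLinearMap ∘ₗ
      TensorProduct.map A.eps (LinearMap.id : V →ₗ[k] V) ∘ₗ A.Yc (-1) = LinearMap.id :=
    LinearMap.ext fun w => by simpa using A.cocreation w
  norm_num [zbinom_neg_one_zero] at h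
  have h2 := congrArg (PhiMap A.eps) h
  rw [map_sub, Phi_assoc_rT, Phi_T_assoc_rT, Phi_lT, hE0, hEm1,
    TensorProduct.map_zero_left, TensorProduct.map_id, A.cocreation v] at h2
  simp only [LinearMap.zero_apply, LinearMap.id_apply, zero_sub] at h2
  nth_rewrite 1 [← h2]
  abel

end AuxLemmas2
section AuxLemmas3

open TensorProduct LinearMap

set_option linter.unusedSectionVars false

variable {k : Type*} [Field k]

/-- Over a field, `ker (f ⊗ id) = range (ι_{ker f} ⊗ id)`. -/
lemma mem_range_rTensor {V W X : Type*} [AddCommGroup V] [Module k V]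
    [AddCommGroup W] [Module k W] [AddCommGroup X] [Module k X]
    (f : V →ₗ[k] X) {x : V ⊗[k] W}
    (hx : TensorProduct.map f (LinearMap.id : W →ₗ[k] W) x = 0) :
    x ∈ LinearMap.range (TensorProduct.map (LinearMap.ker f).subtype
      (LinearMap.id : W →ₗ[k] W)) := by
  have hexact : Function.Exact ⇑(LinearMap.ker f).subtype ⇑f.rangeRestrict := by
    rw [LinearMap.exact_iff, LinearMap.ker_rangeRestrict]
    exact LinearMap.exact_iff.mp (LinearMap.exact_subtype_ker_map f)
  have h2 := rTensor_exact (R := k) W hexact f.surjective_rangeRestrict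
  have h3 : LinearMap.rTensor W f.rangeRestrict x = 0 := by
    apply Module.Flat.rTensor_preserves_injective_linearMap (M := W)
      ((LinearMap.range f).subtype) (Submodule.injective_subtype _)
    rw [map_zero, ← LinearMap.rTensor_comp_apply]
    exact hx
  obtain ⟨y, hy⟩ := (h2 x).mp h3
  exact ⟨y, hy⟩

/-- Over a field, `ker (id ⊗ f) = range (id ⊗ ι_{ker f})`. -/
lemma mem_range_lTensor {V W X : Type*} [AddCommGroup V] [Module k V]
    [AddCommGroup W] [Module k W] [AddCommGroup X] [Module k X]
    (f : W →ₗ[k] X) {x : V ⊗[k] W}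
    (hx : TensorProduct.map (LinearMap.id : V →ₗ[k] V) f x = 0) :
    x ∈ LinearMap.range (TensorProduct.map (LinearMap.id : V →ₗ[k] V)
      (LinearMap.ker f).subtype) := by
  have hexact : Function.Exact ⇑(LinearMap.ker f).subtype ⇑f.rangeRestrict := by
    rw [LinearMap.exact_iff, LinearMap.ker_rangeRestrict]
    exact LinearMap.exact_iff.mp (LinearMap.exact_subtype_ker_map f)
  have h2 := lTensor_exact (R := k) V hexact f.surjective_rangeRestrict
  have h3 : LinearMap.lTensor V f.rangeRestrict x = 0 := by
    apply Module.Flat.lTensor_preserves_injective_linearMap (M := V)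
      ((LinearMap.range f).subtype) (Submodule.injective_subtype _)
    rw [map_zero, ← LinearMap.lTensor_comp_apply]
    exact hx
  obtain ⟨y, hy⟩ := (h2 x).mp h3
  exact ⟨y, hy⟩

/-- Over a field, `ker (f ⊗ id) ∩ ker (id ⊗ f) = range (ι ⊗ ι)`. -/
lemma mem_range_map {V X : Type*} [AddCommGroup V] [Module k V]
    [AddCommGroup X] [Module k X]
    (f : V →ₗ[k] X) {x : V ⊗[k] V}
    (h1 : TensorProduct.map f (LinearMap.id : V →ₗ[k] V) x = 0)
    (h2 : TensorProduct.map (LinearMap.id : V →ₗ[k] V) f x = 0) :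
    x ∈ LinearMap.range (TensorProduct.map (LinearMap.ker f).subtype
      (LinearMap.ker f).subtype) := by
  obtain ⟨y, hy⟩ := mem_range_rTensor f h1
  have hcomm : TensorProduct.map (LinearMap.ker f).subtype (LinearMap.id : X →ₗ[k] X)
      (TensorProduct.map (LinearMap.id : LinearMap.ker f →ₗ[k] LinearMap.ker f) f y)
      = TensorProduct.map (LinearMap.id : V →ₗ[k] V) f x := by
    rw [← hy, ← LinearMap.comp_apply, ← TensorProduct.map_comp,
      ← LinearMap.comp_apply, ← TensorProduct.map_comp]
    simp
  rw [h2] at hcomm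
  have hz : TensorProduct.map (LinearMap.id : LinearMap.ker f →ₗ[k] LinearMap.ker f)
      f y = 0 := by
    have hinj := Module.Flat.rTensor_preserves_injective_linearMap (M := X)
      ((LinearMap.ker f).subtype) (Submodule.injective_subtype _)
    apply hinj
    rw [map_zero]
    exact hcomm
  obtain ⟨w, hw⟩ := mem_range_lTensor f hz
  refine ⟨w, ?_⟩
  rw [← hy, ← hw, ← LinearMap.comp_apply, ← TensorProduct.map_comp]
  simp

end AuxLemmas3
section AuxLemmas4

open TensorProduct LinearMap

set_option linter.unusedSectionVars false

variable {k Γ V : Type*} [Field k] [CharZero k] [AddCommGroup Γ]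
    [DecidableEq Γ] [AddCommGroup V] [Module k V] {γ0 : Γ} {β : Γ → Γ → k}

/-- If the left components of `X` lie in `Ker Ŷ_{-2}`, then
`((T∘Ŷ_0) ⊗ id) X = -(Ŷ_0 ⊗ id) X`. -/
lemma T_Y0_neg (A : VCoalg k Γ γ0 β V) {X : V ⊗[k] V}
    (hX : TensorProduct.map (A.Yc (-2)) (LinearMap.id : V →ₗ[k] V) X = 0) :
    TensorProduct.map (A.T ∘ₗ A.Yc 0) (LinearMap.id : V →ₗ[k] V) X =
      - TensorProduct.map (A.Yc 0) (LinearMap.id : V →ₗ[k] V) X := by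
  obtain ⟨y, hy⟩ := mem_range_rTensor (A.Yc (-2)) hX
  have hcomp : (A.T ∘ₗ A.Yc 0 + A.Yc 0) ∘ₗ (LinearMap.ker (A.Yc (-2))).subtype
      = 0 := by
    ext u
    have hs := skew A (LinearMap.mem_ker.mp u.2)
    simp only [LinearMap.comp_apply, LinearMap.add_apply, Submodule.coe_subtype,
      LinearMap.zero_apply]
    rw [add_comm] at hs
    simpa using hs
  have hz : TensorProduct.map (A.T ∘ₗ A.Yc 0 + A.Yc 0)
      (LinearMap.id : V →ₗ[k] V) X = 0 := by
    rw [← hy, ← LinearMap.comp_apply, ← TensorProduct.map_comp, hcomp]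
    simp
  rw [TensorProduct.map_add_left] at hz
  exact eq_neg_of_add_eq_zero_left hz

/-- `ξ^β` negates `assoc ((Ŷ_0 ⊗ id) Z)` when the left components of `Z`
lie in `Ker Ŷ_{-2}`. -/
lemma xiB_assoc_neg (A : VCoalg k Γ γ0 β V) {Z : V ⊗[k] V}
    (hZ : TensorProduct.map (A.Yc (-2)) (LinearMap.id : V →ₗ[k] V) Z = 0) :
    xiB A.T ((TensorProduct.assoc k V V V)
        (TensorProduct.map (A.Yc 0) (LinearMap.id : V →ₗ[k] V) Z)) =
      - TensorProduct.map (LinearMap.id : V →ₗ[k] V) A.T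
          ((TensorProduct.assoc k V V V)
            (TensorProduct.map (A.Yc 0) (LinearMap.id : V →ₗ[k] V) Z)) := by
  have h1 := T_Y0_neg A hZ
  have hmt : TensorProduct.map A.T (LinearMap.id : V →ₗ[k] V)
      (TensorProduct.map (A.Yc 0) (LinearMap.id : V →ₗ[k] V) Z) =
      TensorProduct.map (A.T ∘ₗ A.Yc 0) (LinearMap.id : V →ₗ[k] V) Z := by
    rw [← LinearMap.comp_apply, ← TensorProduct.map_comp]
    congr 1
  simp only [xiB, LinearMap.comp_apply, LinearEquiv.coe_coe]
  rw [LinearEquiv.symm_apply_apply, hmt, h1, map_neg, map_neg]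

/-- The key `β`-multiplicativity computation:
`ξ^β ∘ (id ⊗ Ŷ_0) = assoc ∘ (Ŷ_0 ⊗ id) ∘ T^β`. -/
lemma xiB_lT (A : VCoalg k Γ γ0 β V)
    (hβmul : ∀ γ1 γ2 γ3 : Γ, β γ1 γ2 * β γ1 γ3 = β γ1 (γ2 + γ3))
    (X : V ⊗[k] V) :
    xiB A.T (TensorProduct.map (LinearMap.id : V →ₗ[k] V) (A.Yc 0) X) =
      (TensorProduct.assoc k V V V)
        (TensorProduct.map (A.Yc 0) (LinearMap.id : V →ₗ[k] V) (A.T X)) := by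
  have xih : ∀ (a : Γ) (u : V), u ∈ A.Vg a → ∀ (b : Γ) (z : V ⊗[k] V),
      z ∈ tensorDeg A.Vg b →
      xiB A.T (u ⊗ₜ[k] z) = β a b • (TensorProduct.assoc k V V V) (z ⊗ₜ[k] u) := by
    intro a u hu b z hz
    induction hz using Submodule.span_induction with
    | mem x hx =>
      obtain ⟨c, d, w, w', hw, hw', hcd, rfl⟩ := hx
      simp only [xiB, LinearMap.comp_apply, LinearEquiv.coe_coe,
        TensorProduct.assoc_symm_tmul, TensorProduct.map_tmul, LinearMap.id_apply]
      rw [A.T_apply a c u w hu hw, ← TensorProduct.smul_tmul', map_smul,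
        TensorProduct.assoc_tmul, map_smul, TensorProduct.map_tmul,
        LinearMap.id_apply, A.T_apply a d u w' hu hw', TensorProduct.tmul_smul,
        smul_smul, hβmul, hcd, TensorProduct.assoc_tmul]
    | zero => simp
    | add x y hx hy ihx ihy =>
      simp only [TensorProduct.tmul_add, TensorProduct.add_tmul, map_add,
        ihx, ihy, smul_add]
    | smul c x hx ih =>
      rw [TensorProduct.tmul_smul, map_smul, ih, ← TensorProduct.smul_tmul',
        map_smul, smul_comm]
  have main : ∀ (a : Γ) (u : V), u ∈ A.Vg a → ∀ (u' : V),
      xiB A.T (TensorProduct.map (LinearMap.id : V →ₗ[k] V) (A.Yc 0) (u ⊗ₜ[k] u'))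
        = (TensorProduct.assoc k V V V)
            (TensorProduct.map (A.Yc 0) (LinearMap.id : V →ₗ[k] V)
              (A.T (u ⊗ₜ[k] u'))) := by
    intro a u hu u'
    have hu' : u' ∈ ⨆ γ, A.Vg γ := by
      rw [A.internal.submodule_iSup_eq_top]; trivial
    refine Submodule.iSup_induction (motive := fun t => xiB A.T
        (TensorProduct.map (LinearMap.id : V →ₗ[k] V) (A.Yc 0) (u ⊗ₜ[k] t))
        = (TensorProduct.assoc k V V V)
            (TensorProduct.map (A.Yc 0) (LinearMap.id : V →ₗ[k] V)
              (A.T (u ⊗ₜ[k] t)))) A.Vg hu' (fun b w hw => ?_) (by simp) ?_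
    · have hz : A.Yc 0 w ∈ tensorDeg A.Vg b := by
        have hg := A.grading 0 b w hw
        simpa using hg
      rw [TensorProduct.map_tmul, LinearMap.id_apply, xih a u hu b _ hz,
        A.T_apply a b u w hu hw, map_smul, map_smul, TensorProduct.map_tmul,
        LinearMap.id_apply]
    · intro x y hx hy
      simp only [TensorProduct.tmul_add, map_add, hx, hy]
  induction X using TensorProduct.induction_on with
  | zero => simp
  | add x y hx hy => simp only [map_add, hx, hy]
  | tmul u u' =>
    have hu : u ∈ ⨆ γ, A.Vg γ := by
      rw [A.internal.submodule_iSup_eq_top]; trivial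
    refine Submodule.iSup_induction (motive := fun t => xiB A.T
        (TensorProduct.map (LinearMap.id : V →ₗ[k] V) (A.Yc 0) (t ⊗ₜ[k] u'))
        = (TensorProduct.assoc k V V V)
            (TensorProduct.map (A.Yc 0) (LinearMap.id : V →ₗ[k] V)
              (A.T (t ⊗ₜ[k] u')))) A.Vg hu (fun a w hw => main a w hw u')
        (by simp) ?_
    intro x y hx hy
    simp only [TensorProduct.add_tmul, map_add, hx, hy]

end AuxLemmas4
/-- for a `(G_Γ, β, γ0)`-vertex coalgebra `V` with
`β(γ1,γ2)·β(γ1,γ3) = β(γ1,γ2+γ3)`, and every `v ∈ Ker Ŷ_{-2}`: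
(i) `Ŷ_0(v)` lies in the image of `(Ker Ŷ_{-2}) ⊗ (Ker Ŷ_{-2}) → V ⊗ V`;
(ii) `Ŷ_0(v) + T^β(Ŷ_0(v)) = 0`;
(iii) `(id + ξ^β + ξ^β∘ξ^β)((id ⊗ Ŷ_0)(Ŷ_0(v))) = 0`;
(iv) `(Ŷ_{-1} ⊗ id)(Ŷ_0(v)) = (id ⊗ Ŷ_0)(Ŷ_{-1}(v))
       − ξ^β((Ŷ_0 ⊗ id)(Ŷ_{-1}(v)))`,
all read via the canonical associativity isomorphisms.  Consequently
`Ker Ŷ_{-2}`, with the restrictions of `Ŷ_{-1}`, `ε` and `Ŷ_0`, is a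
`β`-cocommutative `(G_Γ, β)`-co-Poisson coalgebra of degree `0`. -/
theorem statement19 {k Γ V : Type*} [Field k] [CharZero k] [AddCommGroup Γ]
    [DecidableEq Γ] [AddCommGroup V] [Module k V]
    (γ0 : Γ) (β : Γ → Γ → k) (A : VCoalg k Γ γ0 β V)
    (hβmul : ∀ γ1 γ2 γ3 : Γ, β γ1 γ2 * β γ1 γ3 = β γ1 (γ2 + γ3)) :
    ∀ v : V, A.Yc (-2) v = 0 →
      (A.Yc 0 v ∈ LinearMap.range
          (TensorProduct.map (LinearMap.ker (A.Yc (-2))).subtype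
            (LinearMap.ker (A.Yc (-2))).subtype)) ∧
      (A.Yc 0 v + A.T (A.Yc 0 v) = 0) ∧
      (TensorProduct.map (LinearMap.id : V →ₗ[k] V) (A.Yc 0) (A.Yc 0 v)
          + xiB A.T
              (TensorProduct.map (LinearMap.id : V →ₗ[k] V) (A.Yc 0)
                (A.Yc 0 v))
          + xiB A.T (xiB A.T
              (TensorProduct.map (LinearMap.id : V →ₗ[k] V) (A.Yc 0)
                (A.Yc 0 v))) = 0) ∧
      ((TensorProduct.assoc k V V V)
          (TensorProduct.map (A.Yc (-1)) (LinearMap.id : V →ₗ[k] V)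
            (A.Yc 0 v))
        = TensorProduct.map (LinearMap.id : V →ₗ[k] V) (A.Yc 0)
              (A.Yc (-1) v)
          - xiB A.T
              ((TensorProduct.assoc k V V V)
                (TensorProduct.map (A.Yc 0) (LinearMap.id : V →ₗ[k] V)
                  (A.Yc (-1) v)))) := by
  intro v hv
  have h1 : TensorProduct.map (A.Yc (-2)) (LinearMap.id : V →ₗ[k] V)
      (A.Yc 0 v) = 0 := rT_Yc_neg2_Y0 A hv
  have h2 : TensorProduct.map (LinearMap.id : V →ₗ[k] V) (A.Yc (-2))
      (A.Yc 0 v) = 0 := lT_Yc_neg2 A hv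
  have hskew := skew A hv
  refine ⟨mem_range_map (A.Yc (-2)) h1 h2, hskew, ?_, ?_⟩
  · -- (iii)
    have hT0 : A.T (A.Yc 0 v) = - A.Yc 0 v := by
      rw [add_comm] at hskew
      exact eq_neg_of_add_eq_zero_left hskew
    have EqC := coJ_l0 A 0 0 v
    rw [finsum_eq_single _ 0 (fun i hi => by rw [zbinom_zero_eq hi]; simp)] at EqC
    norm_num [zbinom_zero_zero] at EqC
    have hxix : xiB A.T (TensorProduct.map (LinearMap.id : V →ₗ[k] V) (A.Yc 0)
        (A.Yc 0 v)) = - (TensorProduct.assoc k V V V)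
          (TensorProduct.map (A.Yc 0) (LinearMap.id : V →ₗ[k] V) (A.Yc 0 v)) := by
      rw [xiB_lT A hβmul, hT0, map_neg, map_neg]
    have hxiy := xiB_assoc_neg A h1
    rw [hxix, map_neg, hxiy, ← EqC]
    abel
  · -- (iv)
    have EqB := coJ_l0 A 0 (-1) v
    rw [finsum_eq_single _ 0 (fun i hi => by rw [zbinom_zero_eq hi]; simp)] at EqB
    norm_num [zbinom_zero_zero] at EqB
    have h5 := rT_Yc_neg2_Ym1 A hv
    have hxi := xiB_assoc_neg A h5
    rw [hxi, ← EqB]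
    abel
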